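/- If a signed directed graph G is strongly connected and has no negative cycle, then G is sign-definite, i.e., there cannot be two arcs of different signs between the same ordered pair of distinct vertices. The same conclusion holds if G is strongly connected and has no positive cycle. -/
import Mathlib


/-- Signed directed walks: `SWalk pos neg u v s n` means there is a directed walk of
length `n` from `u` to `v` whose parity of negative arcs is `s` (`true` = odd). -/
inductive SWalk {V : Type*} (pos neg : V → V → Prop) : V → V → Bool → ℕ → Prop where
  | nil (u : V) : SWalk pos neg u u false 0
  | consPos {u v w : V} {s : Bool} {n : ℕ} :
      pos u v → SWalk pos neg v w s n → SWalk pos neg u w s (n + 1)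
  | consNeg {u v w : V} {s : Bool} {n : ℕ} :
      neg u v → SWalk pos neg v w s n → SWalk pos neg u w (!s) (n + 1)

/-- a strongly connected signed directed graph with no negative cycle
(or with no positive cycle) is sign-definite. -/
theorem stmt3 {V : Type*} (pos neg : V → V → Prop)
    (hconn : ∀ u v : V, ∃ (s : Bool) (n : ℕ), SWalk pos neg u v s n) :
    ((∀ (u : V) (n : ℕ), ¬ SWalk pos neg u u true n) →
        ∀ u v : V, u ≠ v → ¬ (pos u v ∧ neg u v)) ∧
    ((∀ (u : V) (n : ℕ), n ≠ 0 → ¬ SWalk pos neg u u false n) →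
        ∀ u v : V, u ≠ v → ¬ (pos u v ∧ neg u v)) := by
  constructor
  · intro hno u v _ ⟨hp, hn⟩
    obtain ⟨s, n, hw⟩ := hconn v u
    cases s with
    | false => exact hno u (n+1) (SWalk.consNeg hn hw)
    | true => exact hno u (n+1) (SWalk.consPos hp hw)
  · intro hno u v _ ⟨hp, hn⟩
    obtain ⟨s, n, hw⟩ := hconn v u
    cases s with
    | false => exact hno u (n+1) (Nat.succ_ne_zero n) (SWalk.consPos hp hw)
    | true => exact hno u (n+1) (Nat.succ_ne_zero n) (SWalk.consNeg hn hw)
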